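/- Let S be a nonempty semigroup such that S \ E(S) is finite, and let T be an S-valued sequence of length |S \ E(S)| with Π(T) ∩ E(S) = ∅. If a and b are two distinct elements of supp(T), then a*b = b*a and a*b ∈ {a, b}. -/
import Mathlib


/-- Product, in order, of the nonempty list `a :: l` in a semigroup. -/
def sprod {S : Type*} [Mul S] (a : S) (l : List S) : S := l.foldl (· * ·) a

/-- `pow1 x n = x^(n+1)`: the `(n+1)`-st power of `x` in a semigroup. -/
def pow1 {S : Type*} [Mul S] (x : S) : ℕ → S := fun n => Nat.rec x (fun _ y => y * x) n

/-- `Π(T)`: the set of products, in order, of nonempty lists which are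
permutations of order-preserving sublists of `T`. -/
def PiSet {S : Type*} [Mul S] (T : List S) : Set S :=
  {s | ∃ u : List S, u.Sublist T ∧ ∃ a l, (a :: l).Perm u ∧ sprod a l = s}

/-- `A(L)`: the set of products, in order, of nonempty order-preserving sublists of `L`. -/
def ASet {S : Type*} [Mul S] (L : List S) : Set S :=
  {s | ∃ a l, (a :: l).Sublist L ∧ sprod a l = s}

/-- `HasIndexPeriod x r p` says that `r` is the index of `x` (the least `r > 0` such
that `x^r = x^t` for some positive `t ≠ r`) and `p` is the period of `x` (the least
`p > 0` with `x^(r+p) = x^r`). Powers are expressed via `pow1 x (n-1) = x^n`. -/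
def HasIndexPeriod {S : Type*} [Mul S] (x : S) (r p : ℕ) : Prop :=
  (0 < r ∧ (∃ t, 0 < t ∧ t ≠ r ∧ pow1 x (t - 1) = pow1 x (r - 1)) ∧
    ∀ r', 0 < r' → (∃ t, 0 < t ∧ t ≠ r' ∧ pow1 x (t - 1) = pow1 x (r' - 1)) → r ≤ r') ∧
  (0 < p ∧ pow1 x (r + p - 1) = pow1 x (r - 1) ∧
    ∀ p', 0 < p' → pow1 x (r + p' - 1) = pow1 x (r - 1) → p ≤ p')

section aux
set_option linter.unusedSectionVars false
open List
variable {S : Type*} [Semigroup S]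

lemma sprod_append (a : S) (l : List S) (t : S) :
    sprod a (l ++ [t]) = sprod a l * t := by
  simp [sprod, List.foldl_append]

lemma pow1_succ (x : S) (n : ℕ) : pow1 x (n+1) = pow1 x n * x := rfl

lemma mem_PiSet_iff {T : List S} {s : S} :
    s ∈ PiSet T ↔ ∃ a l, List.Subperm (a :: l) T ∧ sprod a l = s := by
  constructor
  · rintro ⟨u, hu, a, l, hp, hs⟩
    exact ⟨a, l, ⟨u, hp.symm, hu⟩, hs⟩
  · rintro ⟨a, l, ⟨u, hp, hu⟩, hs⟩
    exact ⟨u, hu, a, l, hp.symm, hs⟩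

lemma PiSet_mono {T T' : List S} (h : T.Sublist T') : PiSet T ⊆ PiSet T' := by
  rintro s ⟨u, hu, a, l, hp, hs⟩
  exact ⟨u, hu.trans h, a, l, hp, hs⟩

lemma PiSet_perm {T T' : List S} (h : T.Perm T') : PiSet T = PiSet T' := by
  ext s
  rw [mem_PiSet_iff, mem_PiSet_iff]
  constructor
  · rintro ⟨a, l, hsp, hs⟩; exact ⟨a, l, hsp.trans h.subperm, hs⟩
  · rintro ⟨a, l, hsp, hs⟩; exact ⟨a, l, hsp.trans h.symm.subperm, hs⟩

lemma mem_PiSet_of_mem {T : List S} {a : S} (h : a ∈ T) : a ∈ PiSet T :=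
  ⟨[a], List.singleton_sublist.mpr h, a, [], List.Perm.refl _, rfl⟩

lemma mul_mem_PiSet_append {T : List S} {x t : S} (hx : x ∈ PiSet T) :
    x * t ∈ PiSet (T ++ [t]) := by
  obtain ⟨u, hu, a, l, hp, hs⟩ := hx
  refine ⟨u ++ [t], hu.append (List.Sublist.refl _), a, l ++ [t], ?_, ?_⟩
  · exact hp.append_right [t]
  · rw [sprod_append, hs]

lemma pow1_add (x : S) (m n : ℕ) : pow1 x (m + n + 1) = pow1 x m * pow1 x n := by
  induction n with
  | zero => rfl
  | succ n ih =>
    rw [show m + (n+1) + 1 = (m + n + 1) + 1 from rfl, pow1_succ, ih, pow1_succ, mul_assoc]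

lemma exists_idem_pow {x : S} {i j : ℕ} (hij : i < j) (h : pow1 x i = pow1 x j) :
    ∃ m, pow1 x m * pow1 x m = pow1 x m := by
  obtain ⟨d, hd1, rfl⟩ : ∃ d, 1 ≤ d ∧ j = i + d := ⟨j - i, by omega, by omega⟩
  have step : ∀ c, pow1 x (i + c) = pow1 x (i + c + d) := by
    intro c
    induction c with
    | zero => simpa using h
    | succ c ih =>
      calc pow1 x (i + (c+1)) = pow1 x (i + c) * x := by
            rw [show i + (c+1) = (i + c) + 1 by omega, pow1_succ]
        _ = pow1 x (i + c + d) * x := by rw [ih]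
        _ = pow1 x (i + (c+1) + d) := by
            rw [show i + (c+1) + d = (i + c + d) + 1 by omega, pow1_succ]
  have iter : ∀ k c, pow1 x (i + c) = pow1 x (i + c + k * d) := by
    intro k
    induction k with
    | zero => intro c; simp
    | succ k ih =>
      intro c
      calc pow1 x (i + c) = pow1 x (i + c + k * d) := ih c
        _ = pow1 x (i + (c + k * d)) := by rw [show i + c + k*d = i + (c + k*d) by omega]
        _ = pow1 x (i + (c + k * d) + d) := step _
        _ = pow1 x (i + c + (k+1) * d) := by
            rw [show i + (c + k*d) + d = i + c + (k+1)*d by ring]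
  refine ⟨(i+1) * d - 1, ?_⟩
  have hX : i + 1 ≤ (i+1) * d := by
    calc i + 1 = (i+1) * 1 := by ring
      _ ≤ (i+1) * d := Nat.mul_le_mul_left _ hd1
  set m := (i+1) * d - 1 with hmdef
  have hm : i ≤ m := by omega
  have hmd : m + 1 = (i+1) * d := by omega
  have key : pow1 x (m + m + 1) = pow1 x m := by
    have e1 : m + m + 1 = i + (m - i) + (i+1) * d := by omega
    have e2 : m = i + (m - i) := by omega
    rw [e1, ← iter (i+1) (m - i), ← e2]
  rw [← pow1_add, key]

lemma free_sub {A B E : Set S} (h : B ⊆ A) (hA : A ∩ E = ∅) : B ∩ E = ∅ := by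
  rw [Set.eq_empty_iff_forall_notMem] at *
  exact fun x hx => hA x ⟨h hx.1, hx.2⟩

lemma PiSet_subset_N {T : List S} (h : PiSet T ∩ {e : S | e * e = e} = ∅) :
    PiSet T ⊆ {x : S | x * x ≠ x} := by
  intro x hx hxx
  rw [Set.eq_empty_iff_forall_notMem] at h
  exact h x ⟨hx, hxx⟩

lemma PiSet_ssubset {T : List S} {t : S}
    (hfin : {x : S | x * x ≠ x}.Finite)
    (hfree : PiSet (T ++ [t]) ∩ {e : S | e * e = e} = ∅) :
    PiSet T ⊂ PiSet (T ++ [t]) := by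
  refine ⟨PiSet_mono (List.sublist_append_left _ _), fun hsub => ?_⟩
  have heq : PiSet (T ++ [t]) = PiSet T :=
    le_antisymm hsub (PiSet_mono (List.sublist_append_left _ _))
  have ht : t ∈ PiSet T := heq ▸ mem_PiSet_of_mem (by simp)
  have hpow : ∀ n, pow1 t n ∈ PiSet T := by
    intro n
    induction n with
    | zero => exact ht
    | succ n ih => rw [pow1_succ]; exact heq ▸ mul_mem_PiSet_append ih
  have hfree' : PiSet T ∩ {e : S | e * e = e} = ∅ := heq ▸ hfree
  have hN : PiSet T ⊆ {x : S | x * x ≠ x} := PiSet_subset_N hfree'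
  have hfinP : (PiSet T).Finite := hfin.subset hN
  have hninj : ¬ Function.Injective (fun n => pow1 t n) := by
    intro hinj
    exact (Set.infinite_of_injective_forall_mem hinj hpow) hfinP
  rw [Function.not_injective_iff] at hninj
  obtain ⟨i, j, hij, hne⟩ := hninj
  have : ∃ m, pow1 t m * pow1 t m = pow1 t m := by
    rcases hne.lt_or_gt with h' | h'
    · exact exists_idem_pow h' hij
    · exact exists_idem_pow h' hij.symm
  obtain ⟨m, hm⟩ := this
  exact hN (hpow m) hm

lemma ncard_PiSet_ge (hfin : {x : S | x * x ≠ x}.Finite) :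
    ∀ (R L : List S), PiSet (L ++ R) ∩ {e : S | e * e = e} = ∅ →
      (PiSet L).ncard + R.length ≤ (PiSet (L ++ R)).ncard := by
  intro R
  induction R with
  | nil => intro L _; simp
  | cons t R ih =>
    intro L h
    have hres : L ++ t :: R = (L ++ [t]) ++ R := by simp
    rw [hres] at h ⊢
    have h2 : PiSet (L ++ [t]) ∩ {e : S | e * e = e} = ∅ :=
      free_sub (PiSet_mono (List.sublist_append_left _ _)) h
    have hlt : (PiSet L).ncard < (PiSet (L ++ [t])).ncard :=
      Set.ncard_lt_ncard (PiSet_ssubset hfin h2) (hfin.subset (PiSet_subset_N h2))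
    have := ih (L ++ [t]) h
    simp only [List.length_cons]
    omega

end aux

/-- Claim A: for an idempotent-product free sequence `T` of maximal length
`|S \ E(S)|`, any two distinct terms `a, b` of `T` commute and `a*b ∈ {a, b}`. -/
theorem stmt_7 {S : Type*} [Semigroup S] [Nonempty S]
    (hfin : {x : S | x * x ≠ x}.Finite)
    (T : List S) (hlen : T.length = {x : S | x * x ≠ x}.ncard)
    (hfree : PiSet T ∩ {e : S | e * e = e} = ∅) :
    ∀ a b : S, a ∈ T → b ∈ T → a ≠ b → a * b = b * a ∧ (a * b = a ∨ a * b = b) := by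
  classical
  intro a b ha hb hab
  have hpa : T.Perm (a :: T.erase a) := List.perm_cons_erase ha
  have hbe : b ∈ T.erase a := (List.mem_erase_of_ne (Ne.symm hab)).mpr hb
  have hpb : (T.erase a).Perm (b :: (T.erase a).erase b) := List.perm_cons_erase hbe
  set R := (T.erase a).erase b with hR
  have hperm : T.Perm ([a, b] ++ R) := hpa.trans (hpb.cons a)
  have hPi : PiSet T = PiSet ([a, b] ++ R) := PiSet_perm hperm
  have hfree' : PiSet ([a, b] ++ R) ∩ {e : S | e * e = e} = ∅ := hPi ▸ hfree
  have hcount := ncard_PiSet_ge hfin R [a, b] hfree'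
  have hsubN : PiSet ([a, b] ++ R) ⊆ {x : S | x * x ≠ x} := PiSet_subset_N hfree'
  have hle : (PiSet ([a, b] ++ R)).ncard ≤ {x : S | x * x ≠ x}.ncard :=
    Set.ncard_le_ncard hsubN hfin
  have hlen' : ([a, b] ++ R).length = T.length := hperm.length_eq.symm
  have hlen2 : R.length + 2 = {x : S | x * x ≠ x}.ncard := by
    have h := hlen'
    simp only [List.length_append, List.length_cons, List.length_nil] at h
    omega
  have h2 : (PiSet ([a, b] : List S)).ncard ≤ 2 := by omega
  have hfinAB : (PiSet ([a, b] : List S)).Finite :=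
    hfin.subset (fun x hx => hsubN (PiSet_mono (List.sublist_append_left _ _) hx))
  have key : ∀ x, x ∈ PiSet ([a, b] : List S) → x = a ∨ x = b := by
    intro x hx
    by_contra hne
    push_neg at hne
    have hmema : a ∈ PiSet ([a, b] : List S) := mem_PiSet_of_mem (by simp)
    have hmemb : b ∈ PiSet ([a, b] : List S) := mem_PiSet_of_mem (by simp)
    have hsub3 : ({a, b, x} : Set S) ⊆ PiSet ([a, b] : List S) := by
      intro y hy
      rcases hy with rfl | rfl | rfl
      · exact hmema
      · exact hmemb
      · exact hx
    have h3 : ({a, b, x} : Set S).ncard = 3 := by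
      rw [Set.ncard_insert_of_notMem (by simp [hab, Ne.symm hne.1]),
          Set.ncard_insert_of_notMem (by simp [Ne.symm hne.2]), Set.ncard_singleton]
    have := Set.ncard_le_ncard hsub3 hfinAB
    omega
  have hmab : a * b ∈ PiSet ([a, b] : List S) :=
    ⟨[a, b], List.Sublist.refl _, a, [b], List.Perm.refl _, rfl⟩
  have hmba : b * a ∈ PiSet ([a, b] : List S) :=
    ⟨[a, b], List.Sublist.refl _, b, [a], List.Perm.swap a b [], rfl⟩
  have hna : a * a ≠ a := hsubN (hPi ▸ mem_PiSet_of_mem ha)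
  have hnb : b * b ≠ b := hsubN (hPi ▸ mem_PiSet_of_mem hb)
  rcases key _ hmab with h1 | h1 <;> rcases key _ hmba with h2' | h2'
  · exact ⟨by rw [h1, h2'], Or.inl h1⟩
  · exfalso
    apply hna
    calc a * a = (a * b) * a := by rw [h1]
      _ = a * (b * a) := mul_assoc _ _ _
      _ = a * b := by rw [h2']
      _ = a := h1
  · exfalso
    apply hnb
    calc b * b = b * (a * b) := by rw [h1]
      _ = (b * a) * b := (mul_assoc _ _ _).symm
      _ = a * b := by rw [h2']
      _ = b := h1
  · exact ⟨by rw [h1, h2'], Or.inr h1⟩
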